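/- Let S = {s₀, s₁, s₂, ...} be a countable semigroup of idempotents with multiplication sₙsₘ = s_{max(n,m)}. Then f ∈ ℓ¹(S) is an idempotent under convolution if and only if: f(sₙ) ∈ {−1, 0, 1} for all n, f(sₙ) = 0 for all sufficiently large n, and Σ_{n=0}^{m} f(sₙ) ∈ {0, 1} for every m ≥ 0. -/

import Mathlib

private lemma conv_eval (f : ℕ → ℂ) (t : ℕ) :
    (∑' x : {x : ℕ × ℕ // max x.1 x.2 = t}, f x.1.1 * f x.1.2)
      = 2 * (∑ n ∈ Finset.range (t+1), f n) * f t - f t * f t := by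
  classical
  have h1 : (∑' x : {x : ℕ × ℕ // max x.1 x.2 = t}, f x.1.1 * f x.1.2)
      = ∑' x : ℕ × ℕ, Set.indicator {x : ℕ × ℕ | max x.1 x.2 = t}
          (fun x => f x.1 * f x.2) x :=
    _root_.tsum_subtype {x : ℕ × ℕ | max x.1 x.2 = t} (fun x => f x.1 * f x.2)
  rw [h1, tsum_eq_sum (s := (Finset.range (t+1)) ×ˢ (Finset.range (t+1)))
    (by
      intro b hb
      apply Set.indicator_of_notMem
      simp only [Finset.mem_product, Finset.mem_range, not_and_or, not_lt] at hb
      simp only [Set.mem_setOf_eq]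
      have h1 := le_max_left b.1 b.2
      have h2 := le_max_right b.1 b.2
      omega)]
  have hmem : ∀ x ∈ (Finset.range (t+1)) ×ˢ (Finset.range (t+1)),
      Set.indicator {x : ℕ × ℕ | max x.1 x.2 = t} (fun x => f x.1 * f x.2) x
        = if x.1 = t ∨ x.2 = t then f x.1 * f x.2 else 0 := by
    intro x hx
    simp only [Finset.mem_product, Finset.mem_range] at hx
    rw [Set.indicator_apply]
    congr 1
    simp only [Set.mem_setOf_eq, eq_iff_iff]
    omega
  rw [Finset.sum_congr rfl hmem, Finset.sum_product]
  have ht : t ∈ Finset.range (t+1) := Finset.mem_range.mpr (Nat.lt_succ_self t)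
  rw [← Finset.sum_erase_add _ _ ht]
  have hA : ∀ a ∈ (Finset.range (t+1)).erase t,
      (∑ b ∈ Finset.range (t+1), if a = t ∨ b = t then f a * f b else 0)
        = f a * f t := by
    intro a ha
    have ha' : a ≠ t := (Finset.mem_erase.mp ha).1
    have : ∀ b ∈ Finset.range (t+1),
        (if a = t ∨ b = t then f a * f b else 0) = if b = t then f a * f b else 0 := by
      intro b _; simp [ha']
    rw [Finset.sum_congr rfl this, Finset.sum_ite_eq' _ _ (fun b => f a * f b), if_pos ht]
  rw [Finset.sum_congr rfl hA]
  have hB : (∑ b ∈ Finset.range (t+1), if t = t ∨ b = t then f t * f b else 0)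
      = f t * ∑ n ∈ Finset.range (t+1), f n := by
    rw [Finset.mul_sum]
    exact Finset.sum_congr rfl fun b _ => by simp
  rw [hB, ← Finset.sum_mul]
  have hC : (∑ a ∈ (Finset.range (t+1)).erase t, f a)
      = (∑ n ∈ Finset.range (t+1), f n) - f t := by
    have := Finset.sum_erase_add (Finset.range (t+1)) f ht
    linear_combination this
  rw [hC]; ring

/-- Characterisation of the idempotents of `ℓ¹(ℕ, max)` (the semigroup of
idempotents `sₙ sₘ = s_{max(n,m)}`). -/
theorem l1_max_semigroup_idempotents (f : ℕ → ℂ) (hsum : Summable fun n => ‖f n‖) :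
    (∀ t : ℕ, f t = ∑' x : {x : ℕ × ℕ // max x.1 x.2 = t}, f x.1.1 * f x.1.2) ↔
      ((∀ n, f n = -1 ∨ f n = 0 ∨ f n = 1) ∧
        (∃ N, ∀ n ≥ N, f n = 0) ∧
        (∀ m, (∑ n ∈ Finset.range (m + 1), f n) = 0 ∨
          (∑ n ∈ Finset.range (m + 1), f n) = 1)) := by
  have key : (∀ t : ℕ, f t = ∑' x : {x : ℕ × ℕ // max x.1 x.2 = t}, f x.1.1 * f x.1.2) ↔
      ∀ t, f t = 2 * (∑ n ∈ Finset.range (t+1), f n) * f t - f t * f t := by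
    constructor
    · intro h t; have := h t; rwa [conv_eval] at this
    · intro h t; rw [conv_eval]; exact h t

  rw [key]
  constructor
  · intro h
    -- main induction: values in {-1,0,1} and partial sums in {0,1}
    have main : ∀ t, (f t = -1 ∨ f t = 0 ∨ f t = 1) ∧
        ((∑ n ∈ Finset.range (t+1), f n) = 0 ∨ (∑ n ∈ Finset.range (t+1), f n) = 1) := by
      intro t
      induction t with
      | zero =>
        have h0 := h 0
        rw [Finset.sum_range_one] at h0 ⊢
        have : f 0 * (f 0 - 1) = 0 := by linear_combination -h0
        rcases mul_eq_zero.mp this with h1 | h1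
        · exact ⟨Or.inr (Or.inl h1), Or.inl h1⟩
        · have : f 0 = 1 := by linear_combination h1
          exact ⟨Or.inr (Or.inr this), Or.inr this⟩
      | succ t ih =>
        have ht := h (t+1)
        rw [Finset.sum_range_succ] at ht
        have hz : f (t+1) * (2 * (∑ n ∈ Finset.range (t+1), f n) + f (t+1) - 1) = 0 := by
          linear_combination -ht
        rw [Finset.sum_range_succ]
        rcases mul_eq_zero.mp hz with h1 | h1
        · rcases ih.2 with h2 | h2 <;>
            simp [h1, h2]
        · rcases ih.2 with h2 | h2
          · have hf : f (t+1) = 1 := by rw [h2] at h1; linear_combination h1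
            rw [hf, h2]
            exact ⟨Or.inr (Or.inr rfl), Or.inr (by ring)⟩
          · have hf : f (t+1) = -1 := by rw [h2] at h1; linear_combination h1
            rw [hf, h2]
            exact ⟨Or.inl rfl, Or.inl (by ring)⟩
    refine ⟨fun n => (main n).1, ?_, fun m => (main m).2⟩
    -- eventual vanishing from summability
    have htend : Filter.Tendsto (fun n => ‖f n‖) Filter.atTop (nhds 0) :=
      hsum.tendsto_atTop_zero
    have hev : ∀ᶠ n in Filter.atTop, ‖f n‖ < 1 :=
      htend.eventually_lt_const one_pos
    rcases Filter.eventually_atTop.mp hev with ⟨N, hN⟩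
    refine ⟨N, fun n hn => ?_⟩
    rcases (main n).1 with h1 | h1 | h1
    · exfalso; have := hN n hn; rw [h1] at this; simp at this
    · exact h1
    · exfalso; have := hN n hn; rw [h1] at this; simp at this
  · rintro ⟨-, -, h3⟩ t
    cases t with
    | zero =>
      rw [Finset.sum_range_one]
      have := h3 0
      rw [Finset.sum_range_one] at this
      rcases this with hv | hv <;> rw [hv] <;> ring
    | succ t =>
      have e : f (t+1) = (∑ n ∈ Finset.range (t+1+1), f n)
          - (∑ n ∈ Finset.range (t+1), f n) := by
        rw [Finset.sum_range_succ]; ring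
      rcases h3 t with hv | hv <;> rcases h3 (t+1) with hw | hw <;>
        rw [e, hv, hw] <;> ring
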